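/- Let n ≥ 1 be an integer and, for integers j ≥ 0, set M_j = 2^{j+1} − 1, γ_j = 2M_j = 2^{j+2} − 2, and γ̂_j = 2M_j + 4(M_j + 1)/n. For j ≥ 1 define τ_j = ((γ̂_j − γ_j)/(γ̂_j − γ_{j−1}))·(γ_{j−1}/γ_j). Then for every j ≥ 1: τ_j ∈ (0, 1), 1/γ_j = τ_j/γ_{j−1} + (1 − τ_j)/γ̂_j, τ_j·γ_j/γ_{j−1} = 4/(n+4), and (1 − τ_j)·γ_j/γ̂_j = n/(n+4). -/

import Mathlib

/-- Let `n ≥ 1` be an integer and, for integers `j ≥ 0`, set `M_j = 2^{j+1} − 1`,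
`γ_j = 2M_j = 2^{j+2} − 2`, and `γ̂_j = 2M_j + 4(M_j + 1)/n`. For `j ≥ 1` define
`τ_j = ((γ̂_j − γ_j)/(γ̂_j − γ_{j−1}))·(γ_{j−1}/γ_j)`. Then for every `j ≥ 1`:
`τ_j ∈ (0, 1)`, `1/γ_j = τ_j/γ_{j−1} + (1 − τ_j)/γ̂_j`,
`τ_j·γ_j/γ_{j−1} = 4/(n+4)`, and `(1 − τ_j)·γ_j/γ̂_j = n/(n+4)`. -/
theorem stmt15 (n : ℕ) (hn : 1 ≤ n) (j : ℕ) (hj : 1 ≤ j) :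
    let Mexp : ℕ → ℚ := fun i => 2 ^ (i + 1) - 1
    let γ : ℕ → ℚ := fun i => 2 * Mexp i
    let γhat : ℕ → ℚ := fun i => 2 * Mexp i + 4 * (Mexp i + 1) / (n : ℚ)
    let τ : ℚ := (γhat j - γ j) / (γhat j - γ (j - 1)) * (γ (j - 1) / γ j)
    0 < τ ∧ τ < 1 ∧
      1 / γ j = τ / γ (j - 1) + (1 - τ) / γhat j ∧
      τ * γ j / γ (j - 1) = 4 / ((n : ℚ) + 4) ∧
      (1 - τ) * γ j / γhat j = (n : ℚ) / ((n : ℚ) + 4) := by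
  obtain ⟨k, rfl⟩ : ∃ k, j = k + 1 := ⟨j - 1, (Nat.succ_pred_eq_of_pos hj).symm⟩
  intro Mexp γ γhat τ
  have hnQ : (1 : ℚ) ≤ (n : ℚ) := by exact_mod_cast hn
  have hn0 : (n : ℚ) ≠ 0 := by positivity
  have hn4 : (0 : ℚ) < (n : ℚ) + 4 := by linarith
  set x : ℚ := 2 ^ (k + 1) with hxdef
  have hx2 : (2 : ℚ) ≤ x := by
    rw [hxdef]
    calc (2:ℚ) = 2 ^ 1 := by norm_num
    _ ≤ 2 ^ (k + 1) := by
      apply pow_le_pow_right₀ (by norm_num)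
      omega
  have hgprev : γ (k + 1 - 1) = 2 * x - 2 := by
    simp only [γ, Mexp, Nat.add_sub_cancel]; ring
  have hg : γ (k + 1) = 4 * x - 2 := by
    simp only [γ, Mexp, hxdef]; ring
  have hgh : γhat (k + 1) = 4 * x - 2 + 8 * x / n := by
    simp only [γhat, Mexp, hxdef]; ring_nf
  have hgprev0 : (0 : ℚ) < 2 * x - 2 := by linarith
  have hg0 : (0 : ℚ) < 4 * x - 2 := by linarith
  have hnQ0 : (0 : ℚ) < (n : ℚ) := by linarith
  have hgh0 : (0 : ℚ) < 4 * x - 2 + 8 * x / n := by positivity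
  have hτ : τ = 4 * (2 * x - 2) / ((n + 4) * (4 * x - 2)) := by
    simp only [τ, hgprev, hg, hgh]
    rw [div_mul_div_comm]
    have h8 : (0:ℚ) < 8 * x / n := by positivity
    rw [div_eq_div_iff (by nlinarith) (by positivity)]
    field_simp
    ring
  refine ⟨?_, ?_, ?_, ?_, ?_⟩
  · rw [hτ]; positivity
  · rw [hτ, div_lt_one (by positivity)]; nlinarith
  · rw [hτ, hgprev, hg, hgh]
    have hx1 : x - 1 ≠ 0 := by linarith
    field_simp
    ring
  · rw [hτ, hgprev, hg]
    have hx1 : x - 1 ≠ 0 := by linarith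
    field_simp
  · rw [hτ, hg, hgh]
    field_simp
    ring
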